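/- Let n, k, d₀, d₁ be positive integers, d = d₀·d₁, ε > 0, and 0 < δ < 1/2. Let Σ = {1,…,d₀+1}^{d₁} ∪ {⊥}. For every deterministic owner O (for k rounds of (ε,δ)-concentrated functions {0,1}^n → ℝ^d) there exists a (k,n,Σ) block decision tree T_O such that: (1) for every w ∈ Σ^{<k}, Pr_{X uniform on {0,1}^n}[v_w(X) = ⊥] ≤ δ; and (2) for all X_1,…,X_k ∈ {0,1}^n, if no coordinate of T_O(X_1,…,X_k) ∈ Σ^k equals ⊥, then in the interaction O ↔ S₀(X_1,…,X_k) one has max_{1≤i≤k} ‖Y_i − μ_i‖_∞ ≤ (3d₀+5)ε. -/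

import Mathlib

open Classical

/-- Probability of `P` under the uniform distribution on a finite type. -/
noncomputable def pr {α : Type*} [Fintype α] (P : α → Prop) : ℝ :=
  ((Finset.univ.filter P).card : ℝ) / (Fintype.card α : ℝ)

/-- `f : {0,1}^n → ℝ^d` is `(ε,δ)`-concentrated at `μ`. -/
def Concentrated (n d : ℕ) (ε δ : ℝ)
    (f : (Fin n → Bool) → Fin d → ℝ) (μ : Fin d → ℝ) : Prop :=
  pr (fun X : Fin n → Bool => ∃ j, |f X j - μ j| > ε) ≤ δ

/-- A deterministic owner for `k` rounds of `(ε,δ)`-concentrated functions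
`{0,1}^n → ℝ^d`: given the history of responses `Y_1,…,Y_{i-1}`, it produces
a function `f_i` together with a point `μ_i` at which `f_i` is concentrated. -/
structure Owner (n k d : ℕ) (ε δ : ℝ) where
  act : List (Fin d → ℝ) → (((Fin n → Bool) → Fin d → ℝ) × (Fin d → ℝ))
  conc : ∀ ys : List (Fin d → ℝ), ys.length < k →
    Concentrated n d ε δ (act ys).1 (act ys).2

/-- A one-query steward with randomness complexity `m`: in each round it chooses
a query point from its randomness and the past query answers, and it chooses a
response from its randomness and the past and current query answers. -/
structure Steward (n k d m : ℕ) where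
  q : (Fin m → Bool) → List (Fin d → ℝ) → (Fin n → Bool)
  r : (Fin m → Bool) → List (Fin d → ℝ) → (Fin d → ℝ) → (Fin d → ℝ)

/-- The interaction `O ↔ S(Z)` for `i` rounds: the list of triples `(Y_i, W_i, μ_i)`. -/
noncomputable def run {n k d m : ℕ} {ε δ : ℝ} (O : Owner n k d ε δ) (S : Steward n k d m)
    (Z : Fin m → Bool) : ℕ → List ((Fin d → ℝ) × (Fin d → ℝ) × (Fin d → ℝ))
  | 0 => []
  | i + 1 =>
    let h := run O S Z i
    let fμ := O.act (h.map fun p => p.1)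
    let X := S.q Z (h.map fun p => p.2.1)
    let W := fμ.1 X
    h ++ [(S.r Z (h.map fun p => p.2.1) W, W, fμ.2)]

/-- `S` is a one-query `(ε',δ')`-steward for `k` adaptively chosen
`(ε,δ)`-concentrated functions `{0,1}^n → ℝ^d`. -/
def IsSteward (n k d m : ℕ) (ε δ ε' δ' : ℝ) (S : Steward n k d m) : Prop :=
  ∀ O : Owner n k d ε δ,
    pr (fun Z : Fin m → Bool =>
      ∃ p ∈ run O S Z k, ∃ j : Fin d, |p.1 j - p.2.2 j| > ε') ≤ δ'

/-- Rounds `x` to the midpoint of the half-open interval `[L·m, L·(m+1))` containing it. -/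
noncomputable def roundMid (L x : ℝ) : ℝ := L * ⌊x / L⌋ + L / 2

/-- The least `Δ ∈ {1,…,d₀+1}` such that, for every coordinate `j` in block `t`
(the blocks being the consecutive runs of `d₀` coordinates), the interval
`[W_j + (2Δ−1)ε, W_j + (2Δ+1)ε]` is contained in a single half-open interval
`[2ε(d₀+1)·m, 2ε(d₀+1)·(m+1))`. -/
noncomputable def shiftBlock (d d₀ : ℕ) (ε : ℝ) (W : Fin d → ℝ) (t : ℕ) : ℕ :=
  sInf {Δ : ℕ | 1 ≤ Δ ∧ Δ ≤ d₀ + 1 ∧ ∀ j : Fin d, (j : ℕ) / d₀ = t →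
    ∃ m : ℤ, 2 * ε * (d₀ + 1) * m ≤ W j + (2 * Δ - 1) * ε ∧
      W j + (2 * Δ + 1) * ε < 2 * ε * (d₀ + 1) * (m + 1)}

/-- The interaction `O ↔ S₀(X_1,…,X_k)` with the (generalized) shifting-and-rounding
steward `S₀` (block size `d₀`): the list of pairs `(Y_i, μ_i)`. In round `i`,
`S₀` queries `f_i` at the fresh random point `X_i`, shifts each block of `d₀`
coordinates of `W_i = f_i(X_i)` by `2·Δ_{it}·ε`, and rounds each coordinate to the
midpoint of the length-`2ε(d₀+1)` half-open interval containing it. -/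
noncomputable def runS0 (n d d₀ k : ℕ) (ε δ : ℝ) (O : Owner n k d ε δ)
    (Xs : List (Fin n → Bool)) : List ((Fin d → ℝ) × (Fin d → ℝ)) :=
  Xs.foldl (fun h X =>
    let fμ := O.act (h.map Prod.fst)
    let W := fμ.1 X
    h ++ [(fun j : Fin d =>
      roundMid (2 * ε * (d₀ + 1)) (W j + 2 * (shiftBlock d d₀ ε W ((j : ℕ) / d₀)) * ε),
      fμ.2)]) []

/-- The output string of a `(k,n,Σ)` block decision tree, given as the family of
node functions `v_w` indexed by strings `w`, on input the list `Xs` of blocks: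
`σ_i = v_{(σ_1,…,σ_{i-1})}(X_i)`. -/
def treeOutList {A I : Type*} (v : List A → I → A) (Xs : List I) : List A :=
  Xs.foldl (fun w X => w ++ [v w X]) []

/-- `Gen` is a `γ`-PRG for `(k,n,A)` block decision trees: for every tree, the total
variation distance between the output distribution on pseudorandom inputs and on
truly random inputs is at most `γ`. -/
def IsBDTPRG (n k s : ℕ) (A : Type*) [Fintype A] (γ : ℝ)
    (Gen : (Fin s → Bool) → Fin k → (Fin n → Bool)) : Prop :=
  ∀ v : List A → (Fin n → Bool) → A,
    (1 / 2) * ∑ σ : Fin k → A,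
      |pr (fun x : Fin s → Bool => treeOutList v (List.ofFn (Gen x)) = List.ofFn σ)
        - pr (fun X : Fin k → (Fin n → Bool) => treeOutList v (List.ofFn X) = List.ofFn σ)|
      ≤ γ

/-! ### Auxiliary lemmas -/

section Aux

lemma pr_congr {α : Type*} [Fintype α] {P Q : α → Prop} (h : ∀ a, P a ↔ Q a) :
    pr P = pr Q := by
  have : P = Q := funext fun a => propext (h a)
  rw [this]

lemma roundMid_eq {L a b : ℝ} {m : ℤ} (hL : 0 < L)
    (h1 : L * m ≤ a) (h2 : a < L * (m + 1)) (h3 : L * m ≤ b) (h4 : b < L * (m + 1)) :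
    roundMid L a = roundMid L b := by
  have key : ∀ x : ℝ, L * m ≤ x → x < L * (m + 1) → ⌊x / L⌋ = m := by
    intro x hx1 hx2
    rw [Int.floor_eq_iff]
    constructor
    · rw [le_div_iff₀ hL]; linarith
    · rw [div_lt_iff₀ hL]; push_cast; linarith
  unfold roundMid
  rw [key a h1 h2, key b h3 h4]

lemma abs_roundMid_sub (L x : ℝ) (hL : 0 < L) : |roundMid L x - x| ≤ L / 2 := by
  have f1 : (⌊x / L⌋ : ℝ) ≤ x / L := Int.floor_le _
  have f2 : x / L < ⌊x / L⌋ + 1 := Int.lt_floor_add_one _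
  have f1' : L * (⌊x / L⌋ : ℝ) ≤ x := by
    have := (le_div_iff₀ hL).mp f1; linarith
  have f2' : x < L * ((⌊x / L⌋ : ℝ) + 1) := by
    have := (div_lt_iff₀ hL).mp f2; linarith
  rw [abs_le]
  unfold roundMid
  constructor <;> nlinarith

lemma cross_contradiction (d₀ : ℕ) (ε L x : ℝ) (hε : 0 < ε)
    (hLdef : L = 2 * ε * ((d₀ : ℝ) + 1))
    (Δ₁ Δ₂ : ℕ) (h1 : 1 ≤ Δ₁) (h2 : Δ₁ ≤ d₀ + 1) (h3 : 1 ≤ Δ₂) (h4 : Δ₂ ≤ d₀ + 1)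
    (hlt : Δ₁ < Δ₂) (m₁ m₂ : ℤ)
    (c1 : x + (2 * Δ₁ - 1) * ε < L * m₁) (c1' : L * m₁ ≤ x + (2 * Δ₁ + 1) * ε)
    (c2 : x + (2 * Δ₂ - 1) * ε < L * m₂) (c2' : L * m₂ ≤ x + (2 * Δ₂ + 1) * ε) :
    False := by
  have hL : 0 < L := by rw [hLdef]; positivity
  have hΔ : (Δ₁ : ℝ) + 1 ≤ Δ₂ := by exact_mod_cast hlt
  have hΔ' : (Δ₂ : ℝ) ≤ Δ₁ + d₀ := by
    have : Δ₂ ≤ Δ₁ + d₀ := by omega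
    exact_mod_cast this
  have hm : (m₁ : ℝ) < m₂ := by
    have h := c1'.trans_lt (lt_of_le_of_lt (by nlinarith) c2)
    exact_mod_cast lt_of_mul_lt_mul_left h hL.le
  have hm' : (m₁ : ℝ) + 1 ≤ m₂ := by
    have : m₁ + 1 ≤ m₂ := by exact_mod_cast hm
    exact_mod_cast this
  have hB : L * m₁ + L ≤ L * m₂ := by nlinarith [mul_le_mul_of_nonneg_left hm' hL.le]
  nlinarith [mul_le_mul_of_nonneg_right hΔ' hε.le]

lemma exists_good_delta (d d₀ : ℕ) (hd₀ : 0 < d₀) (ε : ℝ) (hε : 0 < ε)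
    (W : Fin d → ℝ) (t : ℕ) :
    {Δ : ℕ | 1 ≤ Δ ∧ Δ ≤ d₀ + 1 ∧ ∀ j : Fin d, (j : ℕ) / d₀ = t →
      ∃ m : ℤ, 2 * ε * (d₀ + 1) * m ≤ W j + (2 * Δ - 1) * ε ∧
        W j + (2 * Δ + 1) * ε < 2 * ε * (d₀ + 1) * (m + 1)}.Nonempty := by
  by_contra hne
  rw [Set.not_nonempty_iff_eq_empty, Set.eq_empty_iff_forall_notMem] at hne
  set L : ℝ := 2 * ε * ((d₀ : ℝ) + 1) with hLdef
  have hL : 0 < L := by rw [hLdef]; positivity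
  have hbad : ∀ Δ : ℕ, 1 ≤ Δ → Δ ≤ d₀ + 1 → ∃ j : Fin d, (j : ℕ) / d₀ = t ∧
      ∃ m : ℤ, W j + (2 * Δ - 1) * ε < L * m ∧ L * m ≤ W j + (2 * Δ + 1) * ε := by
    intro Δ hΔ1 hΔ2
    have h1 := hne Δ
    simp only [Set.mem_setOf_eq] at h1
    push_neg at h1
    obtain ⟨j, hj, hj2⟩ := h1 hΔ1 hΔ2
    refine ⟨j, hj, ?_⟩
    set a : ℝ := W j + (2 * (Δ : ℝ) - 1) * ε with ha
    have f1 : (⌊a / L⌋ : ℝ) ≤ a / L := Int.floor_le _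
    have f2 : a / L < ⌊a / L⌋ + 1 := Int.lt_floor_add_one _
    have f1' : L * (⌊a / L⌋ : ℝ) ≤ a := by
      have := (le_div_iff₀ hL).mp f1; linarith
    have f2' : a < L * ((⌊a / L⌋ : ℝ) + 1) := by
      have := (div_lt_iff₀ hL).mp f2; linarith
    have h3 := hj2 ⌊a / L⌋ f1'
    refine ⟨⌊a / L⌋ + 1, ?_, ?_⟩
    · push_cast; linarith
    · push_cast at h3 ⊢
      have hab : W j + (2 * (Δ : ℝ) + 1) * ε = a + 2 * ε := by rw [ha]; ring
      linarith
  have hbad' : ∀ Δ : (Finset.Icc 1 (d₀ + 1) : Finset ℕ), ∃ j : Fin d,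
      (j : ℕ) / d₀ = t ∧ ∃ m : ℤ, W j + (2 * (Δ : ℕ) - 1) * ε < L * m ∧
        L * m ≤ W j + (2 * (Δ : ℕ) + 1) * ε := by
    intro Δ
    have hΔ := Δ.2
    rw [Finset.mem_Icc] at hΔ
    exact hbad Δ hΔ.1 hΔ.2
  choose F hF1 hF2 using hbad'
  have hmaps : ∀ Δ ∈ (Finset.univ : Finset (Finset.Icc 1 (d₀ + 1) : Finset ℕ)),
      F Δ ∈ Finset.univ.filter (fun j : Fin d => (j : ℕ) / d₀ = t) := by
    intro Δ _
    simp [Finset.mem_filter, hF1]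
  have hcard_t : (Finset.univ.filter (fun j : Fin d => (j : ℕ) / d₀ = t)).card ≤ d₀ := by
    have : (Finset.univ.filter (fun j : Fin d => (j : ℕ) / d₀ = t)).card ≤
        (Finset.range d₀).card := by
      apply Finset.card_le_card_of_injOn (fun j : Fin d => (j : ℕ) % d₀)
      · intro j _
        simp [Nat.mod_lt _ hd₀]
      · intro j₁ h₁ j₂ h₂ hmod
        simp only [Finset.mem_coe, Finset.mem_filter, Finset.mem_univ, true_and] at h₁ h₂
        have e₁ := Nat.div_add_mod (j₁ : ℕ) d₀
        have e₂ := Nat.div_add_mod (j₂ : ℕ) d₀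
        rw [h₁] at e₁
        rw [h₂] at e₂
        apply Fin.ext
        set Kt := d₀ * t
        simp only [Finset.mem_coe] at hmod ⊢
        omega
    simpa using this
  have hcard_s : (Finset.univ : Finset (Finset.Icc 1 (d₀ + 1) : Finset ℕ)).card = d₀ + 1 := by
    rw [Finset.card_univ, Fintype.card_coe, Nat.card_Icc]
    omega
  obtain ⟨Δ₁, _, Δ₂, _, hne', heq⟩ :=
    Finset.exists_ne_map_eq_of_card_lt_of_maps_to (by rw [hcard_s]; omega) hmaps
  have hΔ₁ := Δ₁.2
  have hΔ₂ := Δ₂.2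
  rw [Finset.mem_Icc] at hΔ₁ hΔ₂
  obtain ⟨m₁, hm₁, hm₁'⟩ := hF2 Δ₁
  obtain ⟨m₂, hm₂, hm₂'⟩ := hF2 Δ₂
  rw [← heq] at hm₂ hm₂'
  have hne'' : (Δ₁ : ℕ) ≠ (Δ₂ : ℕ) := fun h => hne' (Subtype.ext h)
  rcases lt_or_gt_of_ne hne'' with h | h
  · exact cross_contradiction d₀ ε L (W (F Δ₁)) hε hLdef Δ₁ Δ₂ hΔ₁.1 hΔ₁.2 hΔ₂.1 hΔ₂.2
      h m₁ m₂ hm₁ hm₁' hm₂ hm₂'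
  · exact cross_contradiction d₀ ε L (W (F Δ₁)) hε hLdef Δ₂ Δ₁ hΔ₂.1 hΔ₂.2 hΔ₁.1 hΔ₁.2
      h m₂ m₁ hm₂ hm₂' hm₁ hm₁'

lemma shiftBlock_mem (d d₀ : ℕ) (hd₀ : 0 < d₀) (ε : ℝ) (hε : 0 < ε)
    (W : Fin d → ℝ) (t : ℕ) :
    1 ≤ shiftBlock d d₀ ε W t ∧ shiftBlock d d₀ ε W t ≤ d₀ + 1 ∧
      ∀ j : Fin d, (j : ℕ) / d₀ = t →
        ∃ m : ℤ, 2 * ε * (d₀ + 1) * m ≤ W j + (2 * (shiftBlock d d₀ ε W t) - 1) * ε ∧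
          W j + (2 * (shiftBlock d d₀ ε W t) + 1) * ε < 2 * ε * (d₀ + 1) * (m + 1) :=
  Nat.sInf_mem (exists_good_delta d d₀ hd₀ ε hε W t)

lemma shiftBlock_le (d d₀ : ℕ) (ε : ℝ) (W : Fin d → ℝ) (t : ℕ) :
    shiftBlock d d₀ ε W t ≤ d₀ + 1 := by
  unfold shiftBlock
  rcases Set.eq_empty_or_nonempty {Δ : ℕ | 1 ≤ Δ ∧ Δ ≤ d₀ + 1 ∧ ∀ j : Fin d,
      (j : ℕ) / d₀ = t → ∃ m : ℤ, 2 * ε * (d₀ + 1) * m ≤ W j + (2 * Δ - 1) * ε ∧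
        W j + (2 * Δ + 1) * ε < 2 * ε * (d₀ + 1) * (m + 1)} with h | h
  · rw [h, Nat.sInf_empty]; omega
  · exact (Nat.sInf_mem h).2.1

end Aux
section Constr

variable (n k d d₀ d₁ : ℕ) (ε δ : ℝ)

/-- Decode a tree symbol into a shift `Δ ∈ {1,…,d₀+1}` for block `t`. -/
def deltaOf (σ : Option (Fin d₁ → Fin (d₀ + 1))) (t : ℕ) : ℕ :=
  match σ with
  | none => 1
  | some Δv => if h : t < d₁ then (Δv ⟨t, h⟩ : ℕ) + 1 else 1

variable (O : Owner n k d ε δ)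

/-- Reconstruct the responses `Y_1,…,Y_i` from the tree symbols. -/
noncomputable def reconY (ws : List (Option (Fin d₁ → Fin (d₀ + 1)))) :
    List (Fin d → ℝ) :=
  ws.foldl (fun ys σ => ys ++ [fun j : Fin d =>
    roundMid (2 * ε * (d₀ + 1))
      ((O.act ys).2 j + 2 * (deltaOf d₀ d₁ σ ((j : ℕ) / d₀)) * ε)]) []

/-- The node functions of the certification tree. -/
noncomputable def nodeFun (w : List (Option (Fin d₁ → Fin (d₀ + 1))))
    (X : Fin n → Bool) : Option (Fin d₁ → Fin (d₀ + 1)) :=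
  if ∃ j : Fin d, |(O.act (reconY n k d d₀ d₁ ε δ O w)).1 X j -
      (O.act (reconY n k d d₀ d₁ ε δ O w)).2 j| > ε then none
  else some (fun t : Fin d₁ =>
    ⟨shiftBlock d d₀ ε ((O.act (reconY n k d d₀ d₁ ε δ O w)).1 X) t - 1,
      by have := shiftBlock_le d d₀ ε ((O.act (reconY n k d d₀ d₁ ε δ O w)).1 X) (t : ℕ); omega⟩)

lemma nodeFun_def (w : List (Option (Fin d₁ → Fin (d₀ + 1)))) (X : Fin n → Bool) :
    nodeFun n k d d₀ d₁ ε δ O w X =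
      if ∃ j : Fin d, |(O.act (reconY n k d d₀ d₁ ε δ O w)).1 X j -
          (O.act (reconY n k d d₀ d₁ ε δ O w)).2 j| > ε then none
      else some (fun t : Fin d₁ =>
        ⟨shiftBlock d d₀ ε ((O.act (reconY n k d d₀ d₁ ε δ O w)).1 X) t - 1,
          by have := shiftBlock_le d d₀ ε ((O.act (reconY n k d d₀ d₁ ε δ O w)).1 X)
               (t : ℕ); omega⟩) := rfl

lemma foldl_build_length {A B : Type*} (g : List A → B → A) :
    ∀ (l : List B) (init : List A),
      (l.foldl (fun ys σ => ys ++ [g ys σ]) init).length = init.length + l.length := by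
  intro l
  induction l with
  | nil => intro init; simp
  | cons x xs ih =>
    intro init
    rw [List.foldl_cons, ih]
    simp
    omega

lemma reconY_length (ws : List (Option (Fin d₁ → Fin (d₀ + 1)))) :
    (reconY n k d d₀ d₁ ε δ O ws).length = ws.length := by
  unfold reconY
  rw [foldl_build_length]
  simp

lemma reconY_snoc (ws : List (Option (Fin d₁ → Fin (d₀ + 1))))
    (σ : Option (Fin d₁ → Fin (d₀ + 1))) :
    reconY n k d d₀ d₁ ε δ O (ws ++ [σ]) = reconY n k d d₀ d₁ ε δ O ws ++
      [fun j : Fin d => roundMid (2 * ε * (d₀ + 1))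
        ((O.act (reconY n k d d₀ d₁ ε δ O ws)).2 j +
          2 * (deltaOf d₀ d₁ σ ((j : ℕ) / d₀)) * ε)] := by
  unfold reconY
  rw [List.foldl_append]
  rfl

lemma treeOutList_snoc {A I : Type*} (v : List A → I → A) (Xs : List I) (X : I) :
    treeOutList v (Xs ++ [X]) = treeOutList v Xs ++ [v (treeOutList v Xs) X] := by
  unfold treeOutList
  rw [List.foldl_append]
  rfl

lemma runS0_snoc (Xs : List (Fin n → Bool)) (X : Fin n → Bool) :
    runS0 n d d₀ k ε δ O (Xs ++ [X]) = runS0 n d d₀ k ε δ O Xs ++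
      [(fun j : Fin d => roundMid (2 * ε * (d₀ + 1))
          ((O.act ((runS0 n d d₀ k ε δ O Xs).map Prod.fst)).1 X j +
            2 * (shiftBlock d d₀ ε ((O.act ((runS0 n d d₀ k ε δ O Xs).map Prod.fst)).1 X)
              ((j : ℕ) / d₀)) * ε),
        (O.act ((runS0 n d d₀ k ε δ O Xs).map Prod.fst)).2)] := by
  unfold runS0
  rw [List.foldl_append]
  rfl

end Constr
lemma main_invariant (n k d₀ d₁ d : ℕ) (hd₀ : 0 < d₀) (hd : d = d₀ * d₁)
    (ε δ : ℝ) (hε : 0 < ε) (O : Owner n k d ε δ) :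
    ∀ Xs : List (Fin n → Bool),
      (∀ σ ∈ treeOutList (nodeFun n k d d₀ d₁ ε δ O) Xs, σ ≠ none) →
      reconY n k d d₀ d₁ ε δ O (treeOutList (nodeFun n k d d₀ d₁ ε δ O) Xs) =
        (runS0 n d d₀ k ε δ O Xs).map Prod.fst ∧
      ∀ p ∈ runS0 n d d₀ k ε δ O Xs, ∀ j : Fin d,
        |p.1 j - p.2 j| ≤ (3 * (d₀ : ℝ) + 5) * ε := by
  intro Xs
  induction Xs using List.reverseRecOn with
  | nil =>
    intro _
    constructor
    · rfl
    · intro p hp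
      simp [runS0] at hp
  | append_singleton Xs X ih =>
    intro hall
    rw [treeOutList_snoc] at hall
    have hw : ∀ σ ∈ treeOutList (nodeFun n k d d₀ d₁ ε δ O) Xs, σ ≠ none :=
      fun σ hσ => hall σ (List.mem_append_left _ hσ)
    have hσne : nodeFun n k d d₀ d₁ ε δ O (treeOutList (nodeFun n k d d₀ d₁ ε δ O) Xs) X ≠
        none := hall _ (List.mem_append_right _ (List.mem_singleton_self _))
    obtain ⟨Heq, Hbd⟩ := ih hw
    have hcc : ¬ ∃ j : Fin d,
        |(O.act ((runS0 n d d₀ k ε δ O Xs).map Prod.fst)).1 X j -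
          (O.act ((runS0 n d d₀ k ε δ O Xs).map Prod.fst)).2 j| > ε := by
      intro hcon
      apply hσne
      simp only [nodeFun_def, Heq]
      exact if_pos hcon
    have hc : ∀ j : Fin d,
        |(O.act ((runS0 n d d₀ k ε δ O Xs).map Prod.fst)).1 X j -
          (O.act ((runS0 n d d₀ k ε δ O Xs).map Prod.fst)).2 j| ≤ ε := by
      push_neg at hcc
      exact hcc
    have hdelta : ∀ j : Fin d,
        deltaOf d₀ d₁ (nodeFun n k d d₀ d₁ ε δ O
            (treeOutList (nodeFun n k d d₀ d₁ ε δ O) Xs) X) ((j : ℕ) / d₀) =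
          shiftBlock d d₀ ε ((O.act ((runS0 n d d₀ k ε δ O Xs).map Prod.fst)).1 X)
            ((j : ℕ) / d₀) := by
      intro j
      have ht : (j : ℕ) / d₀ < d₁ := by
        have hj : (j : ℕ) < d₁ * d₀ := by rw [Nat.mul_comm]; exact hd ▸ j.2
        exact (Nat.div_lt_iff_lt_mul hd₀).mpr hj
      have h1 := (shiftBlock_mem d d₀ hd₀ ε hε
        ((O.act ((runS0 n d d₀ k ε δ O Xs).map Prod.fst)).1 X) ((j : ℕ) / d₀)).1
      simp only [nodeFun_def, Heq, if_neg hcc]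
      simp only [deltaOf]
      rw [dif_pos ht]
      omega
    constructor
    · rw [treeOutList_snoc, reconY_snoc, Heq, runS0_snoc, List.map_append]
      congr 1
      simp only [List.map_cons, List.map_nil]
      congr 1
      funext j
      rw [hdelta j]
      obtain ⟨m, hm1, hm2⟩ := (shiftBlock_mem d d₀ hd₀ ε hε
        ((O.act ((runS0 n d d₀ k ε δ O Xs).map Prod.fst)).1 X) ((j : ℕ) / d₀)).2.2 j rfl
      have hΔ1 : (1 : ℝ) ≤ (shiftBlock d d₀ ε
          ((O.act ((runS0 n d d₀ k ε δ O Xs).map Prod.fst)).1 X) ((j : ℕ) / d₀) : ℝ) := by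
        exact_mod_cast (shiftBlock_mem d d₀ hd₀ ε hε
          ((O.act ((runS0 n d d₀ k ε δ O Xs).map Prod.fst)).1 X) ((j : ℕ) / d₀)).1
      have habs := abs_le.mp (hc j)
      exact roundMid_eq (m := m) (by positivity)
        (by push_cast at hm1 ⊢; linarith) (by push_cast at hm2 ⊢; linarith)
        (by push_cast at hm1 ⊢; linarith) (by push_cast at hm2 ⊢; linarith)
    · intro p hp j
      rw [runS0_snoc] at hp
      rcases List.mem_append.mp hp with hp | hp
      · exact Hbd p hp j
      · rw [List.mem_singleton] at hp
        subst hp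
        dsimp only
        have hΔle : ((shiftBlock d d₀ ε
            ((O.act ((runS0 n d d₀ k ε δ O Xs).map Prod.fst)).1 X) ((j : ℕ) / d₀)) : ℝ) ≤
            (d₀ : ℝ) + 1 := by
          exact_mod_cast shiftBlock_le d d₀ ε
            ((O.act ((runS0 n d d₀ k ε δ O Xs).map Prod.fst)).1 X) ((j : ℕ) / d₀)
        have hΔ0 : (0 : ℝ) ≤ ((shiftBlock d d₀ ε
            ((O.act ((runS0 n d d₀ k ε δ O Xs).map Prod.fst)).1 X) ((j : ℕ) / d₀)) : ℝ) :=
          Nat.cast_nonneg _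
        have hr := abs_roundMid_sub (2 * ε * ((d₀ : ℝ) + 1))
          ((O.act ((runS0 n d d₀ k ε δ O Xs).map Prod.fst)).1 X j +
            2 * ((shiftBlock d d₀ ε
              ((O.act ((runS0 n d d₀ k ε δ O Xs).map Prod.fst)).1 X) ((j : ℕ) / d₀)) : ℝ) * ε)
          (by positivity)
        have habs := abs_le.mp (hc j)
        rw [abs_le] at hr ⊢
        constructor <;>
          nlinarith [hε.le, mul_le_mul_of_nonneg_right hΔle hε.le, hr.1, hr.2,
            habs.1, habs.2]
/-- generalized certification tree: let `d = d₀·d₁` and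
`Σ = {1,…,d₀+1}^{d₁} ∪ {⊥}` (coded as `Option (Fin d₁ → Fin (d₀+1))` with `none = ⊥`).
For every deterministic owner `O` there is a `(k,n,Σ)` block decision tree certifying
correctness of `O ↔ S₀` (the generalized shifting-and-rounding steward with block size
`d₀`): (1) at every node, the probability of moving to the `⊥`-child is at most `δ`;
(2) whenever the computation path contains no `⊥`, the interaction `O ↔ S₀(X_1,…,X_k)`
satisfies `max_i ‖Y_i − μ_i‖_∞ ≤ (3d₀+5)ε`. -/
theorem generalized_certification_tree (n k d₀ d₁ d : ℕ)
    (hn : 0 < n) (hk : 0 < k) (hd₀ : 0 < d₀) (hd₁ : 0 < d₁) (hd : d = d₀ * d₁)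
    (ε δ : ℝ) (hε : 0 < ε) (hδ0 : 0 < δ) (hδ : δ < 1 / 2)
    (O : Owner n k d ε δ) :
    ∃ v : List (Option (Fin d₁ → Fin (d₀ + 1))) → (Fin n → Bool) →
        Option (Fin d₁ → Fin (d₀ + 1)),
      (∀ w : List (Option (Fin d₁ → Fin (d₀ + 1))), w.length < k →
        pr (fun X : Fin n → Bool => v w X = none) ≤ δ) ∧
      (∀ Xs : List (Fin n → Bool), Xs.length = k →
        (∀ σ ∈ treeOutList v Xs, σ ≠ none) →
        ∀ p ∈ runS0 n d d₀ k ε δ O Xs, ∀ j : Fin d,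
          |p.1 j - p.2 j| ≤ (3 * (d₀ : ℝ) + 5) * ε) := by
  refine ⟨nodeFun n k d d₀ d₁ ε δ O, ?_, ?_⟩
  · intro w hw
    have hlen : (reconY n k d d₀ d₁ ε δ O w).length = w.length :=
      reconY_length n k d d₀ d₁ ε δ O w
    have hconc := O.conc (reconY n k d d₀ d₁ ε δ O w) (by rw [hlen]; exact hw)
    unfold Concentrated at hconc
    refine le_trans (le_of_eq (pr_congr ?_)) hconc
    intro X
    constructor
    · intro hnone
      by_contra hno
      rw [nodeFun_def, if_neg hno] at hnone
      exact Option.some_ne_none _ hnone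
    · intro hex
      rw [nodeFun_def, if_pos hex]
  · intro Xs _ hall
    exact (main_invariant n k d₀ d₁ d hd₀ hd ε δ hε O Xs hall).2
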